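/- Existence of selectors: for positive integers k, m, d, n with 3 ≤ d ≤ m and 2(m−1) < k ≤ n, there exists a (k,m,d,n)-selector of size t for any integer t with t > ln(C(n,k)·C(k,k−m+1)) / ((d(k−m+1))/(4k) − ln(4/3)), provided (d(k−m+1))/(4k) > ln(4/3). -/

import Mathlib

open Finset

namespace SelAux

set_option linter.unusedSectionVars false

variable {α : Type*} [Fintype α] [DecidableEq α]

/-- per-row weight of a Boolean row. -/
noncomputable def wt (p : ℝ) (r : α → Bool) : ℝ := ∏ j, (if r j then p else 1 - p)

lemma wt_nonneg {p : ℝ} (hp0 : 0 ≤ p) (hp1 : p ≤ 1) (r : α → Bool) : 0 ≤ wt p r :=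
  Finset.prod_nonneg fun j _ => by by_cases h : r j <;> simp [h, hp0] <;> linarith

lemma filter_forced_eq_piFinset (S : Finset α) (b : Bool) :
    univ.filter (fun r : α → Bool => ∀ j ∈ S, r j = b)
      = Fintype.piFinset (fun j => if j ∈ S then ({b} : Finset Bool) else univ) := by
  ext r
  simp only [mem_filter, mem_univ, true_and, Fintype.mem_piFinset]
  constructor
  · intro h j
    by_cases hj : j ∈ S <;> simp [hj, h]
  · intro h j hj
    have := h j
    simpa [hj] using this

lemma sum_wt_forced (p : ℝ) (S : Finset α) (b : Bool) :
    ∑ r ∈ univ.filter (fun r : α → Bool => ∀ j ∈ S, r j = b), wt p r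
      = (if b then p else 1 - p) ^ S.card := by
  rw [filter_forced_eq_piFinset]
  unfold wt
  rw [← Finset.prod_univ_sum (fun j => if j ∈ S then ({b} : Finset Bool) else univ)
    (fun j x => if x = true then p else 1 - p)]
  have : ∀ j : α, (∑ x ∈ (if j ∈ S then ({b} : Finset Bool) else univ),
      (if x then p else 1 - p)) = if j ∈ S then (if b then p else 1 - p) else 1 := by
    intro j
    by_cases hj : j ∈ S <;> simp [hj]
  rw [Finset.prod_congr rfl fun j _ => this j, Finset.prod_ite_mem, univ_inter,
    Finset.prod_const]

lemma sum_wt_univ (p : ℝ) : ∑ r : α → Bool, wt p r = 1 := by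
  have h := sum_wt_forced (α := α) p ∅ false
  simpa using h


def RowBad (d : ℕ) (K S : Finset α) (r : α → Bool) : Prop :=
  (∀ j ∈ S, r j = false) ∨ (d + 1 ≤ (K.filter (fun j => r j = true)).card)
instance (d : ℕ) (K S : Finset α) : DecidablePred (RowBad d K S) := fun r => by
  unfold RowBad; infer_instance

/-- union bound over `(d+1)`-subsets: weight of rows with ≥ c ones inside `K`. -/
lemma sum_wt_heavy_le {p : ℝ} (hp0 : 0 ≤ p) (hp1 : p ≤ 1) (K : Finset α) (c : ℕ) :
    ∑ r ∈ univ.filter (fun r : α → Bool => c ≤ (K.filter (fun j => r j = true)).card), wt p r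
      ≤ (K.card.choose c) * p ^ c := by
  classical
  have key : ∑ r ∈ univ.filter
        (fun r : α → Bool => c ≤ (K.filter (fun j => r j = true)).card), wt p r
      ≤ ∑ T ∈ K.powersetCard c,
          ∑ r ∈ univ.filter (fun r : α → Bool => ∀ j ∈ T, r j = true), wt p r := by
    rw [Finset.sum_filter]
    have swap : ∑ T ∈ K.powersetCard c,
        ∑ r ∈ univ.filter (fun r : α → Bool => ∀ j ∈ T, r j = true), wt p r
        = ∑ r : α → Bool, ∑ T ∈ K.powersetCard c,
            (if ∀ j ∈ T, r j = true then wt p r else 0) := by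
      rw [Finset.sum_comm]
      exact Finset.sum_congr rfl fun r _ => by rw [Finset.sum_filter]
    rw [swap]
    refine Finset.sum_le_sum fun r _ => ?_
    by_cases hr : c ≤ (K.filter (fun j => r j = true)).card
    · simp only [hr, if_true]
      obtain ⟨T, hTsub, hTcard⟩ := Finset.exists_subset_card_eq hr
      have hTmem : T ∈ K.powersetCard c := by
        rw [Finset.mem_powersetCard]
        exact ⟨hTsub.trans (Finset.filter_subset _ _), hTcard⟩
      have hTall : ∀ j ∈ T, r j = true := fun j hj => (Finset.mem_filter.1 (hTsub hj)).2
      have h1 := Finset.single_le_sum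
        (f := fun T : Finset α => if ∀ j ∈ T, r j = true then wt p r else 0)
        (fun T _ => by split <;> [exact wt_nonneg hp0 hp1 r; exact le_refl 0]) hTmem
      simp only [if_pos hTall] at h1
      exact h1
    · simp only [hr, if_false]
      refine Finset.sum_nonneg fun T _ => ?_
      split
      · exact wt_nonneg hp0 hp1 r
      · exact le_refl 0
  refine key.trans ?_
  have heach : ∀ T ∈ K.powersetCard c,
      ∑ r ∈ univ.filter (fun r : α → Bool => ∀ j ∈ T, r j = true), wt p r = p ^ c := by
    intro T hT
    rw [sum_wt_forced p T true, if_pos rfl, (Finset.mem_powersetCard.1 hT).2]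
  rw [Finset.sum_congr rfl heach, Finset.sum_const, Finset.card_powersetCard,
    nsmul_eq_mul]


lemma sum_W_rows (p : ℝ) (t : ℕ) (E : Finset (α → Bool)) :
    ∑ M ∈ univ.filter (fun M : Fin t → α → Bool => ∀ i, M i ∈ E),
        ∏ i, wt p (M i)
      = (∑ r ∈ E, wt p r) ^ t := by
  have hset : univ.filter (fun M : Fin t → α → Bool => ∀ i, M i ∈ E)
      = Fintype.piFinset (fun _ : Fin t => E) := by
    ext M
    simp [Fintype.mem_piFinset]
  rw [hset, ← Finset.prod_univ_sum (fun _ : Fin t => E) (fun _ r => wt p r),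
    Finset.prod_const, Finset.card_univ, Fintype.card_fin]

lemma sum_W_univ (p : ℝ) (t : ℕ) :
    ∑ M : Fin t → α → Bool, ∏ i, wt p (M i) = 1 := by
  have h := sum_W_rows (α := α) p t univ
  rw [sum_wt_univ, one_pow] at h
  rw [← h]
  congr 1
  ext M
  simp


lemma pow_div_factorial_le_exp (n : ℕ) {x : ℝ} (hx : 0 ≤ x) :
    x ^ n / (Nat.factorial n : ℝ) ≤ Real.exp x := by
  refine le_trans ?_ (Real.sum_le_exp_of_nonneg hx (n + 1))
  exact Finset.single_le_sum (f := fun i => x ^ i / (Nat.factorial i : ℝ))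
    (fun i _ => by positivity) (Finset.self_mem_range_succ n)

lemma analytic (k d a : ℕ) (hd : 3 ≤ d) (hk : 2 * d ≤ k + 1) (hak : a ≤ k)
    (hk0 : 0 < k) :
    (k.choose (d + 1) : ℝ) * ((d : ℝ) / (4 * k)) ^ (d + 1)
      ≤ (1 / 3) * (1 - (d : ℝ) / (4 * k)) ^ a := by
  set p : ℝ := (d : ℝ) / (4 * k) with hp
  have hkR : (0:ℝ) < k := by exact_mod_cast hk0
  have hdR : (3:ℝ) ≤ d := by exact_mod_cast hd
  have h5d4k : 5 * (d:ℝ) ≤ 4 * k := by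
    have : 5 * d ≤ 4 * k := by omega
    exact_mod_cast this
  have hp0 : 0 < p := by positivity
  have hp5 : p ≤ 1 / 5 := by
    rw [hp, div_le_div_iff₀ (by positivity) (by norm_num)]
    linarith
  have hkp : (k : ℝ) * p = (d : ℝ) / 4 := by
    rw [hp]; field_simp
  -- Step 1: choose * p^(d+1) ≤ (d/4)^(d+1)/(Nat.factorial (d+1) : ℝ)
  have step1 : (k.choose (d + 1) : ℝ) * p ^ (d + 1)
      ≤ ((d:ℝ)/4) ^ (d+1) / (Nat.factorial (d+1) : ℝ) := by
    have h1 : (k.choose (d + 1) : ℝ) ≤ (k:ℝ) ^ (d+1) / (Nat.factorial (d+1) : ℝ) := by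
      have := Nat.choose_le_pow_div (α := ℝ) (d+1) k
      simpa using this
    have h2 : (k.choose (d + 1) : ℝ) * p ^ (d + 1)
        ≤ ((k:ℝ) ^ (d+1) / (Nat.factorial (d+1) : ℝ)) * p ^ (d+1) :=
      mul_le_mul_of_nonneg_right h1 (by positivity)
    refine h2.trans_eq ?_
    rw [div_mul_eq_mul_div, ← mul_pow, hkp]
  -- Step 2: 1/(Nat.factorial (d+1) : ℝ) ≤ exp(d+1)/(d+1)^(d+1), i.e. (d/4)^(d+1)/(Nat.factorial (d+1) : ℝ) ≤ ((d/(d+1))*(e/4))^(d+1)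
  have hfac : ((d:ℝ)+1) ^ (d+1) / (Nat.factorial (d+1) : ℝ) ≤ Real.exp ((d:ℝ)+1) := by
    have := pow_div_factorial_le_exp (d+1) (x := (d:ℝ)+1) (by positivity)
    simpa [Nat.cast_add, Nat.cast_one] using this
  have hfacpos : (0:ℝ) < (Nat.factorial (d+1) : ℝ) := by exact_mod_cast (d+1).factorial_pos
  have step2 : ((d:ℝ)/4) ^ (d+1) / (Nat.factorial (d+1) : ℝ)
      ≤ ((d:ℝ)/((d:ℝ)+1)) ^ (d+1) * (Real.exp 1 / 4) ^ (d+1) := by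
    have hd1 : (0:ℝ) < (d:ℝ)+1 := by positivity
    have h3 : 1 / ((Nat.factorial (d+1) : ℝ) : ℝ) ≤ Real.exp ((d:ℝ)+1) / ((d:ℝ)+1) ^ (d+1) := by
      rw [div_le_div_iff₀ hfacpos (by positivity), one_mul]
      calc ((d:ℝ)+1) ^ (d+1) = (((d:ℝ)+1) ^ (d+1) / (Nat.factorial (d+1) : ℝ)) * (Nat.factorial (d+1) : ℝ) := by
            field_simp
        _ ≤ Real.exp ((d:ℝ)+1) * (Nat.factorial (d+1) : ℝ) := mul_le_mul_of_nonneg_right hfac hfacpos.le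
    calc ((d:ℝ)/4) ^ (d+1) / (Nat.factorial (d+1) : ℝ) = ((d:ℝ)/4) ^ (d+1) * (1 / (Nat.factorial (d+1) : ℝ)) := by ring
      _ ≤ ((d:ℝ)/4) ^ (d+1) * (Real.exp ((d:ℝ)+1) / ((d:ℝ)+1) ^ (d+1)) :=
          mul_le_mul_of_nonneg_left h3 (by positivity)
      _ = ((d:ℝ)/((d:ℝ)+1)) ^ (d+1) * (Real.exp 1 / 4) ^ (d+1) := by
          rw [show Real.exp ((d:ℝ)+1) = Real.exp 1 ^ (d+1) by
            rw [← Real.exp_nat_mul]; norm_num]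
          rw [div_pow, div_pow, div_pow]
          field_simp
  -- Step 3: (d/(d+1))^(d+1) ≤ exp (-1)
  have step3 : ((d:ℝ)/((d:ℝ)+1)) ^ (d+1) ≤ Real.exp (-1) := by
    have hx : (0:ℝ) < (d:ℝ)/((d:ℝ)+1) := by positivity
    have hlog : Real.log ((d:ℝ)/((d:ℝ)+1)) ≤ -1 / ((d:ℝ)+1) := by
      have h := Real.log_le_sub_one_of_pos hx
      have : (d:ℝ)/((d:ℝ)+1) - 1 = -1/((d:ℝ)+1) := by field_simp; ring
      linarith [this ▸ h]
    calc ((d:ℝ)/((d:ℝ)+1)) ^ (d+1)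
        = Real.exp (((d:ℕ)+1 : ℕ) * Real.log ((d:ℝ)/((d:ℝ)+1))) := by
          rw [Real.exp_nat_mul, Real.exp_log hx]
      _ ≤ Real.exp (-1) := by
          apply Real.exp_le_exp.2
          push_cast
          calc ((d:ℝ)+1) * Real.log ((d:ℝ)/((d:ℝ)+1))
              ≤ ((d:ℝ)+1) * (-1/((d:ℝ)+1)) :=
                mul_le_mul_of_nonneg_left hlog (by positivity)
            _ = -1 := by field_simp
  -- Step 4: exp(-1) * (e/4)^(d+1) ≤ (1/3) * exp(-(5/16)*d)
  have step4 : Real.exp (-1) * (Real.exp 1 / 4) ^ (d+1)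
      ≤ (1/3) * Real.exp (-(5/16) * d) := by
    have hlog4 : Real.log 4 = 2 * Real.log 2 := by
      rw [show (4:ℝ) = 2^2 by norm_num, Real.log_pow]; push_cast; ring
    have hlog2 : 0.6931471803 < Real.log 2 := Real.log_two_gt_d9
    have hlog34 : Real.log 3 ≤ Real.log 4 :=
      Real.log_le_log (by norm_num) (by norm_num)
    have he4 : Real.exp 1 / 4 = Real.exp (1 - Real.log 4) := by
      rw [Real.exp_sub, Real.exp_log (by norm_num : (0:ℝ) < 4)]
    have h13 : (1/3 : ℝ) = Real.exp (-Real.log 3) := by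
      rw [Real.exp_neg, Real.exp_log (by norm_num : (0:ℝ) < 3)]
      norm_num
    rw [he4, ← Real.exp_nat_mul, ← Real.exp_add, h13, ← Real.exp_add]
    apply Real.exp_le_exp.2
    push_cast
    nlinarith [Nat.cast_nonneg (α := ℝ) d, hdR]
  -- Step 5: (1/3) * exp(-(5/16)*d) ≤ (1/3) * (1-p)^a
  have step5 : (1/3 : ℝ) * Real.exp (-(5/16) * d) ≤ (1/3) * (1 - p) ^ a := by
    have hexp_le : Real.exp (-(5/4 * p)) ≤ 1 - p := by
      have he := Real.add_one_le_exp (5/4 * p)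
      have hprod : Real.exp (-(5/4 * p)) * Real.exp (5/4 * p) = 1 := by
        rw [← Real.exp_add]; simp
      have h2 : 1 ≤ (1 - p) * Real.exp (5/4 * p) := by nlinarith
      nlinarith [Real.exp_pos (5/4 * p)]
    have hpow : Real.exp (-(5/4 * p)) ^ a ≤ (1 - p) ^ a :=
      pow_le_pow_left₀ (Real.exp_nonneg _) hexp_le a
    have hexp_a : Real.exp (-(5/16) * d) ≤ Real.exp (-(5/4 * p)) ^ a := by
      rw [← Real.exp_nat_mul]
      apply Real.exp_le_exp.2
      have hpa : p * (a:ℝ) ≤ p * (k:ℝ) :=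
        mul_le_mul_of_nonneg_left (by exact_mod_cast hak) hp0.le
      nlinarith [hkp, hpa]
    exact mul_le_mul_of_nonneg_left (hexp_a.trans hpow) (by norm_num)
  calc (k.choose (d + 1) : ℝ) * p ^ (d + 1)
      ≤ ((d:ℝ)/4) ^ (d+1) / (Nat.factorial (d+1) : ℝ) := step1
    _ ≤ ((d:ℝ)/((d:ℝ)+1)) ^ (d+1) * (Real.exp 1 / 4) ^ (d+1) := step2
    _ ≤ Real.exp (-1) * (Real.exp 1 / 4) ^ (d+1) :=
        mul_le_mul_of_nonneg_right step3 (by positivity)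
    _ ≤ (1/3) * Real.exp (-(5/16) * d) := step4
    _ ≤ (1/3) * (1 - p) ^ a := step5


end SelAux


/-- `M` is a `(k,m,d,n)`-selector. -/
def IsSelector {t n : ℕ} (k m d : ℕ) (M : Fin t → Fin n → Bool) : Prop :=
  ∀ K : Finset (Fin n), K.card = k →
    ∃ R : Finset (Fin t),
      (∀ i ∈ R, 1 ≤ (K.filter (fun j => M i j = true)).card ∧
        (K.filter (fun j => M i j = true)).card ≤ d) ∧
      m ≤ (K.filter (fun j => ∃ i ∈ R, M i j = true)).card


namespace SelAux

/-- If `M` fails to be a selector, each failing `k`-set `K` contains an `a`-set `S`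
of columns such that every row is "bad" for `(K, S)`. -/
lemma exists_bad {t n k m d : ℕ} (hm1 : 1 ≤ m) (hmk' : m ≤ k)
    (M : Fin t → Fin n → Bool) (hM : ¬ IsSelector k m d M) :
    ∃ K ∈ powersetCard k (univ : Finset (Fin n)),
      ∃ S ∈ K.powersetCard (k - m + 1), ∀ i, RowBad d K S (M i) := by
  classical
  unfold IsSelector at hM
  push_neg at hM
  obtain ⟨K, hKcard, hKfail⟩ := hM
  set R₀ : Finset (Fin t) :=
    univ.filter (fun i => 1 ≤ (K.filter (fun j => M i j = true)).card ∧
      (K.filter (fun j => M i j = true)).card ≤ d) with hR₀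
  have hcond : ∀ i ∈ R₀, 1 ≤ (K.filter (fun j => M i j = true)).card ∧
      (K.filter (fun j => M i j = true)).card ≤ d :=
    fun i hi => (Finset.mem_filter.1 hi).2
  have hcovered : (K.filter (fun j => ∃ i ∈ R₀, M i j = true)).card < m :=
    hKfail R₀ hcond
  set covered := K.filter (fun j => ∃ i ∈ R₀, M i j = true) with hcov
  have hcovsub : covered ⊆ K := Finset.filter_subset _ _
  have hcard : k - m + 1 ≤ (K \ covered).card := by
    rw [Finset.card_sdiff_of_subset hcovsub, hKcard]
    have := Finset.card_le_card hcovsub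
    omega
  obtain ⟨S, hSsub, hScard⟩ := Finset.exists_subset_card_eq hcard
  refine ⟨K, Finset.mem_powersetCard.2 ⟨Finset.subset_univ _, hKcard⟩, S,
    Finset.mem_powersetCard.2 ⟨hSsub.trans (Finset.sdiff_subset), hScard⟩, ?_⟩
  intro i
  by_cases hall : ∀ j ∈ S, M i j = false
  · exact Or.inl hall
  · right
    push_neg at hall
    obtain ⟨j, hjS, hjt⟩ := hall
    have hjt' : M i j = true := by simpa using hjt
    have hjK : j ∈ K := (Finset.mem_sdiff.1 (hSsub hjS)).1
    have hjnc : j ∉ covered := (Finset.mem_sdiff.1 (hSsub hjS)).2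
    have hiR : i ∉ R₀ := by
      intro hiR
      exact hjnc (Finset.mem_filter.2 ⟨hjK, ⟨i, hiR, hjt'⟩⟩)
    have h1 : 1 ≤ (K.filter (fun j => M i j = true)).card := by
      refine Finset.card_pos.2 ⟨j, Finset.mem_filter.2 ⟨hjK, hjt'⟩⟩
    rw [hR₀] at hiR
    simp only [Finset.mem_filter, Finset.mem_univ, true_and, not_and, not_le] at hiR
    exact hiR h1

end SelAux



open SelAux in
/-- Existence of `(k,m,d,n)`-selectors: for `3 ≤ d ≤ m`, `2(m−1) < k ≤ n`, provided
`d(k−m+1)/(4k) > ln(4/3)`, there is a `(k,m,d,n)`-selector of size `t` for every integer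
`t > ln(C(n,k)·C(k,k−m+1)) / (d(k−m+1)/(4k) − ln(4/3))`. -/
theorem selector_exists (k m d n t : ℕ) (hd : 3 ≤ d) (hdm : d ≤ m)
    (hmk : 2 * (m - 1) < k) (hkn : k ≤ n)
    (hgap : Real.log (4 / 3) < (d : ℝ) * ((k : ℝ) - (m : ℝ) + 1) / (4 * (k : ℝ)))
    (ht : Real.log ((Nat.choose n k : ℝ) * (Nat.choose k (k - m + 1) : ℝ)) /
        ((d : ℝ) * ((k : ℝ) - (m : ℝ) + 1) / (4 * (k : ℝ)) - Real.log (4 / 3)) < (t : ℝ)) :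
    ∃ M : Fin t → Fin n → Bool, IsSelector k m d M := by
  by_contra hcon
  push_neg at hcon
  have hm3 : 3 ≤ m := hd.trans hdm
  have hmk' : m ≤ k := by omega
  have hk0 : 0 < k := by omega
  have hkd : 2 * d ≤ k + 1 := by omega
  set a : ℕ := k - m + 1 with hadef
  have hak : a ≤ k := by omega
  have hkR : (0:ℝ) < k := by exact_mod_cast hk0
  have haR : ((a : ℕ) : ℝ) = (k:ℝ) - m + 1 := by
    rw [hadef]
    push_cast [Nat.cast_sub hmk']
    ring
  set p : ℝ := (d:ℝ) / (4 * k) with hpdef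
  have h5d4k : 5 * (d:ℝ) ≤ 4 * (k:ℝ) := by exact_mod_cast (show 5*d ≤ 4*k by omega)
  have hdR0 : (0:ℝ) < d := by exact_mod_cast (show 0 < d by omega)
  have hp0 : 0 < p := by positivity
  have hp5 : p ≤ 1/5 := by
    rw [hpdef, div_le_div_iff₀ (by positivity) (by norm_num)]
    linarith
  have hp1 : p ≤ 1 := by linarith
  have hW_nonneg : ∀ M : Fin t → Fin n → Bool, 0 ≤ ∏ i, wt p (M i) :=
    fun M => Finset.prod_nonneg fun i _ => wt_nonneg hp0.le hp1 _
  -- per (K,S) row-failure weight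
  have hq_nonneg : ∀ K S : Finset (Fin n),
      0 ≤ ∑ r ∈ univ.filter (RowBad d K S), wt p r :=
    fun K S => Finset.sum_nonneg fun r _ => wt_nonneg hp0.le hp1 r
  have hQpos : (0:ℝ) < (4/3) * Real.exp (-(p * a)) := by positivity
  -- Step A: per-row probability bound
  have hq_le : ∀ K ∈ powersetCard k (univ : Finset (Fin n)), ∀ S ∈ K.powersetCard a,
      (∑ r ∈ univ.filter (RowBad d K S), wt p r) ≤ (4/3) * Real.exp (-(p * a)) := by
    intro K hK S hS
    have hKcard : K.card = k := (Finset.mem_powersetCard.1 hK).2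
    have hScard : S.card = a := (Finset.mem_powersetCard.1 hS).2
    set E1 := univ.filter (fun r : Fin n → Bool => ∀ j ∈ S, r j = false) with hE1def
    set E2 := univ.filter
      (fun r : Fin n → Bool => d + 1 ≤ (K.filter (fun j => r j = true)).card) with hE2def
    have hsub : univ.filter (RowBad d K S) ⊆ E1 ∪ E2 := by
      intro r hr
      rcases (Finset.mem_filter.1 hr).2 with h | h
      · exact Finset.mem_union_left _ (Finset.mem_filter.2 ⟨Finset.mem_univ _, h⟩)
      · exact Finset.mem_union_right _ (Finset.mem_filter.2 ⟨Finset.mem_univ _, h⟩)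
    have h1 : (∑ r ∈ univ.filter (RowBad d K S), wt p r) ≤ ∑ r ∈ E1 ∪ E2, wt p r :=
      Finset.sum_le_sum_of_subset_of_nonneg hsub
        (fun r _ _ => wt_nonneg hp0.le hp1 r)
    have h2 : (∑ r ∈ E1 ∪ E2, wt p r) ≤ (∑ r ∈ E1, wt p r) + ∑ r ∈ E2, wt p r := by
      have h3 := Finset.sum_union_inter (s₁ := E1) (s₂ := E2) (f := wt p)
      have h4 : 0 ≤ ∑ r ∈ E1 ∩ E2, wt p r :=
        Finset.sum_nonneg fun r _ => wt_nonneg hp0.le hp1 r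
      linarith
    have hE1 : (∑ r ∈ E1, wt p r) = (1 - p) ^ a := by
      have h := sum_wt_forced (α := Fin n) p S false
      rw [hScard] at h
      norm_num at h
      rw [← h]
      refine Finset.sum_congr ?_ (fun r _ => rfl)
      ext r
      simp [hE1def]
    have hE2 : (∑ r ∈ E2, wt p r) ≤ (1/3) * (1 - p) ^ a := by
      have h5 := sum_wt_heavy_le hp0.le hp1 K (d+1)
      rw [hKcard] at h5
      have h6 := analytic k d a hd hkd hak hk0
      rw [← hpdef] at h6
      rw [hE2def]
      exact h5.trans h6
    have hexp : (1 - p) ^ a ≤ Real.exp (-(p * a)) := by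
      have h7 : 1 - p ≤ Real.exp (-p) := by
        have := Real.add_one_le_exp (-p)
        linarith
      have h8 : (1 - p) ^ a ≤ Real.exp (-p) ^ a :=
        pow_le_pow_left₀ (by linarith) h7 a
      rw [← Real.exp_nat_mul] at h8
      calc (1 - p) ^ a ≤ Real.exp ((a:ℝ) * (-p)) := h8
        _ = Real.exp (-(p * a)) := by ring_nf
    calc (∑ r ∈ univ.filter (RowBad d K S), wt p r)
        ≤ (∑ r ∈ E1, wt p r) + ∑ r ∈ E2, wt p r := h1.trans h2
      _ ≤ (1 - p) ^ a + (1/3) * (1 - p) ^ a := by rw [hE1]; linarith [hE2]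
      _ = (4/3) * (1 - p) ^ a := by ring
      _ ≤ (4/3) * Real.exp (-(p * a)) := by linarith [hexp]
  -- Step B: union bound over (K, S)
  have main2 : (∑ M : Fin t → Fin n → Bool, ∏ i, wt p (M i))
      ≤ ∑ K ∈ powersetCard k (univ : Finset (Fin n)), ∑ S ∈ K.powersetCard a,
          (∑ r ∈ univ.filter (RowBad d K S), wt p r) ^ t := by
    have pointwise : ∀ M : Fin t → Fin n → Bool, (∏ i, wt p (M i)) ≤
        ∑ K ∈ powersetCard k (univ : Finset (Fin n)), ∑ S ∈ K.powersetCard a,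
          (if ∀ i, RowBad d K S (M i) then ∏ i, wt p (M i) else 0) := by
      intro M
      obtain ⟨K₀, hK₀, S₀, hS₀, hbad⟩ := exists_bad (by omega) hmk' M (hcon M)
      have hterm : ∀ K S : Finset (Fin n),
          0 ≤ (if ∀ i, RowBad d K S (M i) then ∏ i, wt p (M i) else 0) := by
        intro K S
        split
        · exact hW_nonneg M
        · exact le_refl 0
      have h1 : (∏ i, wt p (M i)) ≤ ∑ S ∈ K₀.powersetCard a,
          (if ∀ i, RowBad d K₀ S (M i) then ∏ i, wt p (M i) else 0) := by
        have h2 := Finset.single_le_sum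
          (f := fun S => if ∀ i, RowBad d K₀ S (M i) then ∏ i, wt p (M i) else 0)
          (fun S _ => hterm K₀ S) hS₀
        simp only [if_pos hbad] at h2
        exact h2
      refine h1.trans ?_
      exact Finset.single_le_sum
        (f := fun K => ∑ S ∈ K.powersetCard a,
          (if ∀ i, RowBad d K S (M i) then ∏ i, wt p (M i) else 0))
        (fun K _ => Finset.sum_nonneg fun S _ => hterm K S) hK₀
    calc (∑ M : Fin t → Fin n → Bool, ∏ i, wt p (M i))
        ≤ ∑ M : Fin t → Fin n → Bool,
            ∑ K ∈ powersetCard k (univ : Finset (Fin n)), ∑ S ∈ K.powersetCard a,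
              (if ∀ i, RowBad d K S (M i) then ∏ i, wt p (M i) else 0) :=
          Finset.sum_le_sum fun M _ => pointwise M
      _ = ∑ K ∈ powersetCard k (univ : Finset (Fin n)),
            ∑ M : Fin t → Fin n → Bool, ∑ S ∈ K.powersetCard a,
              (if ∀ i, RowBad d K S (M i) then ∏ i, wt p (M i) else 0) :=
          Finset.sum_comm
      _ = ∑ K ∈ powersetCard k (univ : Finset (Fin n)), ∑ S ∈ K.powersetCard a,
            ∑ M : Fin t → Fin n → Bool,
              (if ∀ i, RowBad d K S (M i) then ∏ i, wt p (M i) else 0) :=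
          Finset.sum_congr rfl fun K _ => Finset.sum_comm
      _ = ∑ K ∈ powersetCard k (univ : Finset (Fin n)), ∑ S ∈ K.powersetCard a,
            (∑ r ∈ univ.filter (RowBad d K S), wt p r) ^ t := by
          refine Finset.sum_congr rfl fun K _ => Finset.sum_congr rfl fun S _ => ?_
          rw [← Finset.sum_filter]
          have hEq : univ.filter (fun M : Fin t → Fin n → Bool => ∀ i, RowBad d K S (M i))
              = univ.filter (fun M : Fin t → Fin n → Bool =>
                  ∀ i, M i ∈ univ.filter (RowBad d K S)) := by
            ext M
            simp
          rw [hEq, sum_W_rows]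
  -- Step C: counting
  have main3 : (∑ K ∈ powersetCard k (univ : Finset (Fin n)), ∑ S ∈ K.powersetCard a,
        (∑ r ∈ univ.filter (RowBad d K S), wt p r) ^ t)
      ≤ (Nat.choose n k : ℝ) * (Nat.choose k a : ℝ) * ((4/3) * Real.exp (-(p * a))) ^ t := by
    have hstep : ∀ K ∈ powersetCard k (univ : Finset (Fin n)),
        (∑ S ∈ K.powersetCard a, (∑ r ∈ univ.filter (RowBad d K S), wt p r) ^ t)
          ≤ (Nat.choose k a : ℝ) * ((4/3) * Real.exp (-(p * a))) ^ t := by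
      intro K hK
      have hKcard : K.card = k := (Finset.mem_powersetCard.1 hK).2
      calc (∑ S ∈ K.powersetCard a, (∑ r ∈ univ.filter (RowBad d K S), wt p r) ^ t)
          ≤ ∑ S ∈ K.powersetCard a, ((4/3) * Real.exp (-(p * a))) ^ t :=
            Finset.sum_le_sum fun S hS =>
              pow_le_pow_left₀ (hq_nonneg K S) (hq_le K hK S hS) t
        _ = (Nat.choose k a : ℝ) * ((4/3) * Real.exp (-(p * a))) ^ t := by
            rw [Finset.sum_const, Finset.card_powersetCard, hKcard, nsmul_eq_mul]
    calc (∑ K ∈ powersetCard k (univ : Finset (Fin n)), ∑ S ∈ K.powersetCard a,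
          (∑ r ∈ univ.filter (RowBad d K S), wt p r) ^ t)
        ≤ ∑ K ∈ powersetCard k (univ : Finset (Fin n)),
            (Nat.choose k a : ℝ) * ((4/3) * Real.exp (-(p * a))) ^ t :=
          Finset.sum_le_sum hstep
      _ = (Nat.choose n k : ℝ) * ((Nat.choose k a : ℝ) * ((4/3) * Real.exp (-(p * a))) ^ t) := by
          rw [Finset.sum_const, Finset.card_powersetCard, Finset.card_univ,
            Fintype.card_fin, nsmul_eq_mul]
      _ = (Nat.choose n k : ℝ) * (Nat.choose k a : ℝ) * ((4/3) * Real.exp (-(p * a))) ^ t := by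
          ring
  -- Step D: the numeric estimate
  have hβ : p * (a:ℝ) = (d:ℝ) * ((k:ℝ) - (m:ℝ) + 1) / (4 * (k:ℝ)) := by
    rw [hpdef, haR]
    ring
  have main4 : (Nat.choose n k : ℝ) * (Nat.choose k a : ℝ)
      * ((4/3) * Real.exp (-(p * a))) ^ t < 1 := by
    have hC : (0:ℝ) < (Nat.choose n k : ℝ) * (Nat.choose k a : ℝ) := by
      have h1 : 0 < Nat.choose n k := Nat.choose_pos hkn
      have h2 : 0 < Nat.choose k a := Nat.choose_pos hak
      have : 0 < Nat.choose n k * Nat.choose k a := Nat.mul_pos h1 h2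
      exact_mod_cast this
    rw [← hβ] at hgap ht
    have hden : 0 < p * (a:ℝ) - Real.log (4/3) := by linarith
    rw [div_lt_iff₀ hden] at ht
    have hQe : (4/3 : ℝ) * Real.exp (-(p * a)) = Real.exp (Real.log (4/3) - p * a) := by
      rw [← Real.exp_log (show (0:ℝ) < 4/3 by norm_num), ← Real.exp_add, Real.exp_log
        (show (0:ℝ) < 4/3 by norm_num)]
      ring_nf
    calc (Nat.choose n k : ℝ) * (Nat.choose k a : ℝ) * ((4/3) * Real.exp (-(p * a))) ^ t
        = Real.exp (Real.log ((Nat.choose n k : ℝ) * (Nat.choose k a : ℝ))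
            + t * (Real.log (4/3) - p * a)) := by
          rw [hQe, ← Real.exp_nat_mul, ← Real.exp_log hC, ← Real.exp_add, Real.log_exp]
      _ < 1 := by
          rw [← Real.exp_zero]
          apply Real.exp_lt_exp.2
          nlinarith [ht]
  -- contradiction
  have hfinal : (1:ℝ) < 1 := by
    calc (1:ℝ) = ∑ M : Fin t → Fin n → Bool, ∏ i, wt p (M i) := (sum_W_univ p t).symm
      _ ≤ _ := main2
      _ ≤ _ := main3
      _ < 1 := main4
  exact absurd hfinal (lt_irrefl 1)
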